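/- arXiv:2604.23898 — 2 statements merged into one kernel-verified Lean document; each statement's English description precedes it below -/
import Mathlib

section
/- Let {P_i} and {Q_j} be complete families of mutually orthogonal Hermitian projectors on ℂ^d and set E = (1/d)·∑_{i,j} Tr((P_i Q_j)²). Then 1/d ≤ E ≤ 1. -/
open Matrix

section Aux

variable {d : ℕ}

private lemma trace_hermitize_re (A : Matrix (Fin d) (Fin d) ℂ) :
    (trace (Aᴴ * A)).re = ∑ j, ∑ k, Complex.normSq (A k j) := by
  simp [Matrix.trace, Matrix.diag, Matrix.mul_apply, Matrix.conjTranspose_apply,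
    Complex.normSq_apply]

private lemma trace_hermitize_nonneg (A : Matrix (Fin d) (Fin d) ℂ) :
    0 ≤ (trace (Aᴴ * A)).re := by
  rw [trace_hermitize_re]
  exact Finset.sum_nonneg fun _ _ => Finset.sum_nonneg fun _ _ => Complex.normSq_nonneg _

/-- Trace of a product of two PSD matrices (in `AᴴA` form) is nonnegative. -/
private lemma trace_psd_mul_nonneg (A B : Matrix (Fin d) (Fin d) ℂ) :
    0 ≤ (trace ((Aᴴ * A) * (Bᴴ * B))).re := by
  have h1 : (Aᴴ * A) * (Bᴴ * B) = Aᴴ * (A * (Bᴴ * B)) := by noncomm_ring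
  have h2 : (A * (Bᴴ * B)) * Aᴴ = (B * Aᴴ)ᴴ * (B * Aᴴ) := by
    rw [Matrix.conjTranspose_mul, Matrix.conjTranspose_conjTranspose]
    noncomm_ring
  rw [h1, Matrix.trace_mul_comm, h2]
  exact trace_hermitize_nonneg _

end Aux

/-- For complete families of mutually orthogonal Hermitian projectors on `ℂ^d`,
the mutual information energy `E = (1/d) ∑_{i,j} Tr((P_i Q_j)²)` satisfies
`1/d ≤ E ≤ 1`. -/
theorem E_bounds (d : ℕ) (hd : 0 < d) (ι κ : Type*) [Fintype ι] [Fintype κ]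
    (P : ι → Matrix (Fin d) (Fin d) ℂ) (Q : κ → Matrix (Fin d) (Fin d) ℂ)
    (hP2 : ∀ i, P i * P i = P i) (hPh : ∀ i, (P i)ᴴ = P i)
    (hQ2 : ∀ j, Q j * Q j = Q j) (hQh : ∀ j, (Q j)ᴴ = Q j)
    (hPorth : ∀ i i', i ≠ i' → P i * P i' = 0)
    (hQorth : ∀ j j', j ≠ j' → Q j * Q j' = 0)
    (hPsum : ∑ i, P i = 1) (hQsum : ∑ j, Q j = 1) :
    1 / (d : ℝ) ≤ (∑ i, ∑ j, (Matrix.trace ((P i * Q j) ^ 2)).re) / (d : ℝ) ∧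
    (∑ i, ∑ j, (Matrix.trace ((P i * Q j) ^ 2)).re) / (d : ℝ) ≤ 1 := by
  have hdR : (0:ℝ) < (d:ℝ) := by exact_mod_cast hd
  set s : ℝ := ∑ i, ∑ j, (Matrix.trace ((P i * Q j) ^ 2)).re with hs
  -- Upper bound: per-term Tr((PQ)²).re ≤ Tr(PQ).re
  have hterm : ∀ i j, (trace ((P i * Q j) ^ 2)).re ≤ (trace (P i * Q j)).re := by
    intro i j
    have hD : (((1 : Matrix (Fin d) (Fin d) ℂ) - P i) * Q j)ᴴ *
        (((1 : Matrix (Fin d) (Fin d) ℂ) - P i) * Q j) = Q j - Q j * P i * Q j := by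
      rw [Matrix.conjTranspose_mul, Matrix.conjTranspose_sub, Matrix.conjTranspose_one,
        hPh i, hQh j]
      have hPP : ((1 : Matrix (Fin d) (Fin d) ℂ) - P i) *
          ((1 : Matrix (Fin d) (Fin d) ℂ) - P i) = (1 : Matrix (Fin d) (Fin d) ℂ) - P i := by
        rw [sub_mul, one_mul, mul_sub, mul_one, hP2 i]; abel
      calc Q j * ((1 : Matrix (Fin d) (Fin d) ℂ) - P i) *
            (((1:Matrix (Fin d) (Fin d) ℂ) - P i) * Q j)
          = Q j * (((1 : Matrix (Fin d) (Fin d) ℂ) - P i) *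
            ((1:Matrix (Fin d) (Fin d) ℂ) - P i)) * Q j := by noncomm_ring
        _ = Q j * ((1 : Matrix (Fin d) (Fin d) ℂ) - P i) * Q j := by rw [hPP]
        _ = Q j * Q j - Q j * P i * Q j := by noncomm_ring
        _ = Q j - Q j * P i * Q j := by rw [hQ2 j]
    have key : P i * Q j - (P i * Q j) ^ 2
        = ((P i)ᴴ * P i) * ((((1 : Matrix (Fin d) (Fin d) ℂ) - P i) * Q j)ᴴ *
            (((1 : Matrix (Fin d) (Fin d) ℂ) - P i) * Q j)) := by
      rw [hD, hPh i, hP2 i, mul_sub, sq]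
      have h1 : P i * (Q j * P i * Q j) = P i * Q j * (P i * Q j) := by noncomm_ring
      rw [h1]
    have h0 : 0 ≤ (trace (P i * Q j - (P i * Q j) ^ 2)).re := by
      rw [key]; exact trace_psd_mul_nonneg _ _
    rw [Matrix.trace_sub, Complex.sub_re] at h0
    linarith
  -- Sum of Tr(P i * Q j) over all i,j is d
  have hsumC : ∑ i, ∑ j, trace (P i * Q j) = (d : ℂ) := by
    simp only [← Matrix.trace_sum]
    rw [← Finset.sum_mul_sum, hPsum, hQsum, mul_one, Matrix.trace_one]
    simp
  have hsum : ∑ i, ∑ j, (trace (P i * Q j)).re = (d : ℝ) := by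
    simp only [← Complex.re_sum]
    rw [hsumC]
    simp
  have hupper : s ≤ (d:ℝ) := by
    rw [hs, ← hsum]
    exact Finset.sum_le_sum fun i _ => Finset.sum_le_sum fun j _ => hterm i j
  -- Lower bound, per j: ((trace (Q j)).re)^2 ≤ d * ∑ i, t i j
  have hlowj : ∀ j, ((trace (Q j)).re)^2 ≤ (d:ℝ) * ∑ i, (trace ((P i * Q j) ^ 2)).re := by
    intro j
    set M : Matrix (Fin d) (Fin d) ℂ := ∑ i, P i * Q j * P i with hM
    have hMh : Mᴴ = M := by
      rw [hM, Matrix.conjTranspose_sum]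
      refine Finset.sum_congr rfl fun i _ => ?_
      simp [Matrix.conjTranspose_mul, hPh i, hQh j, Matrix.mul_assoc]
    have hMtr : trace M = trace (Q j) := by
      rw [hM, Matrix.trace_sum]
      calc ∑ i, trace (P i * Q j * P i)
          = ∑ i, trace (P i * Q j) := by
            refine Finset.sum_congr rfl fun i _ => ?_
            rw [Matrix.trace_mul_cycle, hP2 i]
        _ = trace (Q j) := by
            rw [← Matrix.trace_sum, ← Finset.sum_mul, hPsum, one_mul]
    have hMsq : trace (M * M) = ∑ i, trace ((P i * Q j) ^ 2) := by
      rw [hM, Finset.sum_mul_sum, Matrix.trace_sum]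
      refine Finset.sum_congr rfl fun i _ => ?_
      rw [Matrix.trace_sum, Finset.sum_eq_single i]
      · have e1 : P i * Q j * P i * (P i * Q j * P i)
            = (P i * Q j * P i * Q j) * P i := by
          have e0 : P i * Q j * P i * (P i * Q j * P i)
              = P i * Q j * (P i * P i) * Q j * P i := by noncomm_ring
          rw [e0, hP2 i]
        rw [e1, Matrix.trace_mul_comm]
        have e2 : P i * (P i * Q j * P i * Q j) = P i * P i * Q j * (P i * Q j) := by
          noncomm_ring
        rw [e2, hP2 i, sq]
      · intro i' _ hne
        have e3 : P i * Q j * P i * (P i' * Q j * P i')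
            = P i * Q j * (P i * P i') * Q j * P i' := by noncomm_ring
        rw [e3, hPorth i i' (fun h => hne h.symm)]
        simp
      · simp
    -- Cauchy-Schwarz: (trace M).re ^ 2 ≤ d * (trace (M*M)).re
    have hCS : ((trace M).re)^2 ≤ (d:ℝ) * (trace (M * M)).re := by
      have h1 : (trace (M * M)).re = ∑ a, ∑ k, Complex.normSq (M k a) := by
        have h := trace_hermitize_re M
        rwa [hMh] at h
      have h2 : (trace M).re = ∑ a, (M a a).re := by
        simp [Matrix.trace, Matrix.diag, Complex.re_sum]
      rw [h1, h2]
      calc (∑ a, (M a a).re)^2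
          ≤ (Finset.univ.card : ℝ) * ∑ a, ((M a a).re)^2 :=
            sq_sum_le_card_mul_sum_sq
        _ ≤ (d:ℝ) * ∑ a, ∑ k, Complex.normSq (M k a) := by
            simp only [Finset.card_univ, Fintype.card_fin]
            refine mul_le_mul_of_nonneg_left ?_ (Nat.cast_nonneg d)
            refine Finset.sum_le_sum fun a _ => ?_
            calc ((M a a).re)^2 ≤ Complex.normSq (M a a) := by
                  rw [Complex.normSq_apply, pow_two]
                  nlinarith [mul_self_nonneg (M a a).im]
              _ ≤ ∑ k, Complex.normSq (M k a) :=
                  Finset.single_le_sum (f := fun k => Complex.normSq (M k a))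
                    (fun k _ => Complex.normSq_nonneg _) (Finset.mem_univ a)
    have hre : (∑ i, trace ((P i * Q j) ^ 2)).re = ∑ i, (trace ((P i * Q j) ^ 2)).re :=
      Complex.re_sum _ _
    rw [← hMtr, ← hre, ← hMsq]
    exact hCS
  -- (Tr Q).re ≤ ((Tr Q).re)^2 for hermitian idempotent Q
  have hQtr : ∀ j, (trace (Q j)).re ≤ ((trace (Q j)).re)^2 := by
    intro j
    have hqq : Q j = (Q j)ᴴ * Q j := by rw [hQh j]; exact (hQ2 j).symm
    have hdiag : ∀ a, (Q j a a).re = ∑ k, Complex.normSq (Q j k a) := by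
      intro a
      conv_lhs => rw [hqq]
      simp [Matrix.mul_apply, Matrix.conjTranspose_apply, Complex.re_sum,
        Complex.normSq_apply]
    have hent : ∀ a b, Complex.normSq (Q j a b) ≤ (Q j a a).re * (Q j b b).re := by
      intro a b
      have habs : ‖Q j a b‖ ≤ ∑ k, ‖Q j k a‖ * ‖Q j k b‖ := by
        conv_lhs => rw [hqq]
        calc ‖((Q j)ᴴ * Q j) a b‖
            = ‖∑ k, (starRingEnd ℂ) (Q j k a) * Q j k b‖ := by
              rw [Matrix.mul_apply]; rfl
          _ ≤ ∑ k, ‖(starRingEnd ℂ) (Q j k a) * Q j k b‖ :=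
              norm_sum_le _ _
          _ = ∑ k, ‖Q j k a‖ * ‖Q j k b‖ := by
              refine Finset.sum_congr rfl fun k _ => ?_
              simp
      have hcs : (∑ k, ‖Q j k a‖ * ‖Q j k b‖)^2
          ≤ (∑ k, (‖Q j k a‖)^2) * ∑ k, (‖Q j k b‖)^2 :=
        Finset.sum_mul_sq_le_sq_mul_sq _ _ _
      have h1 : Complex.normSq (Q j a b)
          ≤ (∑ k, ‖Q j k a‖ * ‖Q j k b‖)^2 := by
        rw [← Complex.sq_norm]
        exact pow_le_pow_left₀ (norm_nonneg _) habs 2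
      have h2 : (∑ k, (‖Q j k a‖)^2) = (Q j a a).re := by
        rw [hdiag a]; simp [Complex.sq_norm]
      have h3 : (∑ k, (‖Q j k b‖)^2) = (Q j b b).re := by
        rw [hdiag b]; simp [Complex.sq_norm]
      calc Complex.normSq (Q j a b) ≤ _ := h1
        _ ≤ _ := hcs
        _ = (Q j a a).re * (Q j b b).re := by rw [h2, h3]
    have htr2 : (trace (Q j)).re = ∑ a, ∑ k, Complex.normSq (Q j k a) := by
      conv_lhs => rw [hqq]
      exact trace_hermitize_re (Q j)
    have htrre : (trace (Q j)).re = ∑ a, (Q j a a).re := by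
      simp [Matrix.trace, Matrix.diag, Complex.re_sum]
    calc (trace (Q j)).re = ∑ b, ∑ a, Complex.normSq (Q j a b) := htr2
      _ ≤ ∑ b, ∑ a, (Q j a a).re * (Q j b b).re :=
          Finset.sum_le_sum fun b _ => Finset.sum_le_sum fun a _ => hent a b
      _ = (∑ a, (Q j a a).re) * (∑ b, (Q j b b).re) := by
          rw [Finset.sum_comm, ← Finset.sum_mul_sum]
      _ = ((trace (Q j)).re)^2 := by rw [← htrre, sq]
  have hQsumre : ∑ j, (trace (Q j)).re = (d:ℝ) := by
    have h : ∑ j, trace (Q j) = (d:ℂ) := by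
      rw [← Matrix.trace_sum, hQsum, Matrix.trace_one]; simp
    rw [← Complex.re_sum, h]; simp
  have hlower : 1 ≤ s := by
    have h1 : (d:ℝ) ≤ ∑ j, ((trace (Q j)).re)^2 := by
      rw [← hQsumre]
      exact Finset.sum_le_sum fun j _ => hQtr j
    have h2 : ∑ j, ((trace (Q j)).re)^2 ≤ (d:ℝ) * s := by
      rw [hs, Finset.sum_comm, Finset.mul_sum]
      exact Finset.sum_le_sum fun j _ => hlowj j
    nlinarith
  constructor
  · rw [div_le_div_iff₀ hdR hdR]
    nlinarith
  · rw [div_le_one hdR]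
    exact hupper
end

section
/- Coarse-graining non-increase: let {P_i} and {Q_j} be complete families of mutually orthogonal Hermitian projectors on ℂ^d, and fix distinct indices i₀ ≠ i₁. Let {P'_k} be the family obtained by replacing P_{i₀} and P_{i₁} with P_{i₀} + P_{i₁}. Then ∑_{k,j} Tr((P'_k Q_j)²) ≥ ∑_{i,j} Tr((P_i Q_j)²), with equality if and only if P_{i₀} Q_j P_{i₁} = 0 for every j. -/
open Matrix

lemma trace_conjTranspose_mul_self_re_nonneg {d : ℕ} (A : Matrix (Fin d) (Fin d) ℂ) :
    0 ≤ (Matrix.trace (Aᴴ * A)).re := by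
  rw [Matrix.trace]
  simp only [Matrix.diag, Matrix.mul_apply, Matrix.conjTranspose_apply]
  rw [Complex.re_sum]
  refine Finset.sum_nonneg fun j _ => ?_
  rw [Complex.re_sum]
  refine Finset.sum_nonneg fun i _ => ?_
  simp [← Complex.normSq_eq_conj_mul_self, Complex.normSq_nonneg]

lemma trace_conjTranspose_mul_self_re_eq_zero {d : ℕ} (A : Matrix (Fin d) (Fin d) ℂ) :
    (Matrix.trace (Aᴴ * A)).re = 0 ↔ A = 0 := by
  constructor
  · intro h
    ext i j
    rw [Matrix.trace] at h
    simp only [Matrix.diag, Matrix.mul_apply, Matrix.conjTranspose_apply] at h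
    rw [Complex.re_sum] at h
    have h1 : ∀ j ∈ Finset.univ, (0:ℝ) ≤ (∑ i, (starRingEnd ℂ) (A i j) * A i j).re := by
      intro j _
      rw [Complex.re_sum]
      refine Finset.sum_nonneg fun i _ => ?_
      simp [← Complex.normSq_eq_conj_mul_self, Complex.normSq_nonneg]
    have h2 := (Finset.sum_eq_zero_iff_of_nonneg h1).mp h j (Finset.mem_univ j)
    rw [Complex.re_sum] at h2
    have h3 : ∀ i ∈ Finset.univ, (0:ℝ) ≤ ((starRingEnd ℂ) (A i j) * A i j).re := fun i _ => by
      simp [← Complex.normSq_eq_conj_mul_self, Complex.normSq_nonneg]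
    have h4 := (Finset.sum_eq_zero_iff_of_nonneg h3).mp h2 i (Finset.mem_univ i)
    rw [← Complex.normSq_eq_conj_mul_self] at h4
    simp only [Complex.ofReal_re] at h4
    simpa using Complex.normSq_eq_zero.mp h4
  · intro h; simp [h]

/-- Coarse-graining non-increase: merging `P i₀` and `P i₁` into `P i₀ + P i₁` does not
decrease `∑ Tr((P' Q)²)`, with equality iff `P i₀ * Q j * P i₁ = 0` for every `j`. -/
theorem coarse_graining_nonincrease (d : ℕ) (ι κ : Type*) [Fintype ι] [Fintype κ] [DecidableEq ι]
    (P : ι → Matrix (Fin d) (Fin d) ℂ) (Q : κ → Matrix (Fin d) (Fin d) ℂ)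
    (hP2 : ∀ i, P i * P i = P i) (hPh : ∀ i, (P i)ᴴ = P i)
    (hQ2 : ∀ j, Q j * Q j = Q j) (hQh : ∀ j, (Q j)ᴴ = Q j)
    (hPorth : ∀ i i', i ≠ i' → P i * P i' = 0)
    (hQorth : ∀ j j', j ≠ j' → Q j * Q j' = 0)
    (hPsum : ∑ i, P i = 1) (hQsum : ∑ j, Q j = 1)
    (i₀ i₁ : ι) (hne : i₀ ≠ i₁) :
    (∑ j, (Matrix.trace (((P i₀ + P i₁) * Q j) ^ 2)).re +
        ∑ i ∈ Finset.univ \ {i₀, i₁}, ∑ j, (Matrix.trace ((P i * Q j) ^ 2)).re ≥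
      ∑ i, ∑ j, (Matrix.trace ((P i * Q j) ^ 2)).re) ∧
    ((∑ j, (Matrix.trace (((P i₀ + P i₁) * Q j) ^ 2)).re +
        ∑ i ∈ Finset.univ \ {i₀, i₁}, ∑ j, (Matrix.trace ((P i * Q j) ^ 2)).re =
      ∑ i, ∑ j, (Matrix.trace ((P i * Q j) ^ 2)).re) ↔
      ∀ j, P i₀ * Q j * P i₁ = 0) := by
  -- abbreviation for the cross term
  set A : κ → Matrix (Fin d) (Fin d) ℂ := fun j => P i₁ * Q j * P i₀ with hA
  have hAh : ∀ j, (A j)ᴴ = P i₀ * Q j * P i₁ := by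
    intro j
    simp [hA, Matrix.conjTranspose_mul, hPh, hQh, Matrix.mul_assoc]
  -- cross trace identity
  have hcross : ∀ j, Matrix.trace (P i₀ * Q j * (P i₁ * Q j)) =
      Matrix.trace ((A j)ᴴ * A j) := by
    intro j
    have : (A j)ᴴ * A j = P i₀ * Q j * (P i₁ * Q j) * P i₀ := by
      rw [hAh, hA]
      have h1 : P i₁ * (P i₁ * Q j) = P i₁ * Q j := by
        rw [← Matrix.mul_assoc, hP2]
      calc P i₀ * Q j * P i₁ * (P i₁ * Q j * P i₀)
          = P i₀ * Q j * (P i₁ * (P i₁ * Q j)) * P i₀ := by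
            simp only [Matrix.mul_assoc]
        _ = P i₀ * Q j * (P i₁ * Q j) * P i₀ := by rw [h1]
    rw [this, Matrix.trace_mul_comm (P i₀ * Q j * (P i₁ * Q j)) (P i₀)]
    have : P i₀ * (P i₀ * Q j * (P i₁ * Q j)) = P i₀ * Q j * (P i₁ * Q j) := by
      simp only [← Matrix.mul_assoc, hP2]
    rw [this]
  -- expansion of the merged term
  have hexp : ∀ j, (Matrix.trace (((P i₀ + P i₁) * Q j) ^ 2)).re =
      (Matrix.trace ((P i₀ * Q j) ^ 2)).re + (Matrix.trace ((P i₁ * Q j) ^ 2)).re +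
        2 * (Matrix.trace ((A j)ᴴ * A j)).re := by
    intro j
    have hsq : ((P i₀ + P i₁) * Q j) ^ 2 =
        (P i₀ * Q j) ^ 2 + (P i₁ * Q j) ^ 2 +
          (P i₀ * Q j * (P i₁ * Q j) + P i₁ * Q j * (P i₀ * Q j)) := by
      noncomm_ring
    have htr : Matrix.trace (P i₁ * Q j * (P i₀ * Q j)) =
        Matrix.trace (P i₀ * Q j * (P i₁ * Q j)) := by
      rw [Matrix.trace_mul_comm]
    rw [hsq]
    simp only [Matrix.trace_add, Complex.add_re, htr, hcross j]
    ring
  -- split the full sum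
  have hsplit : ∑ i, ∑ j, (Matrix.trace ((P i * Q j) ^ 2)).re =
      (∑ j, (Matrix.trace ((P i₀ * Q j) ^ 2)).re +
        ∑ j, (Matrix.trace ((P i₁ * Q j) ^ 2)).re) +
      ∑ i ∈ Finset.univ \ {i₀, i₁}, ∑ j, (Matrix.trace ((P i * Q j) ^ 2)).re := by
    have hsub : ({i₀, i₁} : Finset ι) ⊆ Finset.univ := Finset.subset_univ _
    rw [← Finset.sum_sdiff hsub, Finset.sum_pair hne]
    ring
  have hsum1 : ∑ j, (Matrix.trace (((P i₀ + P i₁) * Q j) ^ 2)).re =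
      ∑ j, (Matrix.trace ((P i₀ * Q j) ^ 2)).re +
        ∑ j, (Matrix.trace ((P i₁ * Q j) ^ 2)).re +
        2 * ∑ j, (Matrix.trace ((A j)ᴴ * A j)).re := by
    rw [Finset.mul_sum, ← Finset.sum_add_distrib, ← Finset.sum_add_distrib]
    exact Finset.sum_congr rfl fun j _ => hexp j
  have hnn : ∀ j ∈ Finset.univ, (0:ℝ) ≤ (Matrix.trace ((A j)ᴴ * A j)).re :=
    fun j _ => trace_conjTranspose_mul_self_re_nonneg (A j)
  have hSnn : 0 ≤ ∑ j, (Matrix.trace ((A j)ᴴ * A j)).re := Finset.sum_nonneg hnn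
  constructor
  · rw [hsum1, hsplit]; linarith
  · rw [hsum1, hsplit]
    constructor
    · intro h
      have hS0 : ∑ j, (Matrix.trace ((A j)ᴴ * A j)).re = 0 := by linarith
      intro j
      have := (Finset.sum_eq_zero_iff_of_nonneg hnn).mp hS0 j (Finset.mem_univ j)
      have hA0 := (trace_conjTranspose_mul_self_re_eq_zero (A j)).mp this
      rw [← hAh j, hA0]; simp
    · intro h
      have : ∀ j ∈ Finset.univ, (Matrix.trace ((A j)ᴴ * A j)).re = 0 := by
        intro j _
        have : A j = 0 := by
          have := h j
          have h2 : (A j)ᴴ = 0 := by rw [hAh j, this]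
          simpa using congrArg Matrix.conjTranspose h2
        simp [this]
      rw [Finset.sum_congr rfl this]
      simp
end
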